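/- Let N ≥ 1 be an integer, η ∈ ℂ∖{0}, and suppose ξ_1,…,ξ_N ∈ ℂ satisfy the genericity condition (G). Let γ be any polynomial in λ² of degree at most N−1 (i.e., γ(λ) = ∑_{m=0}^{N−1} c_m λ^{2m}). Then det_{1≤i,j≤N}[ γ(ξ_i^{(0)}) (ξ_i^{(1)})^{2(j−1)} − γ(ξ_i^{(1)}) (ξ_i^{(0)})^{2(j−1)} ] = 0. In particular, for even polynomials α, β with deg α + deg β < 2N (in λ), taking γ = αβ, the scalar-product determinant det_{1≤i,j≤N}[ α(ξ_i^{(0)})β(ξ_i^{(0)})(ξ_i^{(1)})^{2(j−1)} − α(ξ_i^{(1)})β(ξ_i^{(1)})(ξ_i^{(0)})^{2(j−1)} ] vanishes. -/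

import Mathlib

open Finset

/-- Genericity condition (G) on the inhomogeneity parameters. -/
def GenG (N : ℕ) (η : ℂ) (ξ : Fin N → ℂ) : Prop :=
  (∀ j, ξ j ≠ 0 ∧ ξ j ≠ η ∧ ξ j ≠ -η) ∧
  ∀ j k, j ≠ k →
    ξ j + ξ k ≠ 0 ∧ ξ j + ξ k ≠ η ∧ ξ j + ξ k ≠ -η ∧
    ξ j - ξ k ≠ 0 ∧ ξ j - ξ k ≠ η ∧ ξ j - ξ k ≠ -η

lemma coeff_comp_negX (p : Polynomial ℂ) (n : ℕ) :
    (p.comp (-Polynomial.X)).coeff n = (-1) ^ n * p.coeff n := by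
  induction p using Polynomial.induction_on' with
  | add p q hp hq => simp [Polynomial.add_comp, hp, hq, mul_add]
  | monomial k a =>
      rw [Polynomial.monomial_comp, neg_pow, mul_comm ((-1 : Polynomial ℂ) ^ k),
        ← mul_assoc, Polynomial.coeff_monomial]
      have h1 : ((-1 : Polynomial ℂ)) ^ k = Polynomial.C ((-1 : ℂ) ^ k) := by
        rw [map_pow, map_neg, map_one]
      rw [h1, Polynomial.coeff_mul_C, Polynomial.coeff_C_mul, Polynomial.coeff_X_pow]
      rcases eq_or_ne k n with rfl | h
      · ring_nf
        simp
      · simp [h, Ne.symm h]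

lemma odd_coeff_zero (p : Polynomial ℂ) (hp : ∀ x : ℂ, p.eval (-x) = p.eval x)
    (m : ℕ) : p.coeff (2 * m + 1) = 0 := by
  have hcomp : p.comp (-Polynomial.X) = p :=
    Polynomial.funext fun x => by simp [Polynomial.eval_comp, hp x]
  have := coeff_comp_negX p (2 * m + 1)
  rw [hcomp] at this
  have h1 : ((-1 : ℂ)) ^ (2 * m + 1) = -1 := Odd.neg_one_pow ⟨m, by ring⟩
  rw [h1] at this
  linear_combination this / 2

lemma sum_range_two_mul' (f : ℕ → ℂ) (N : ℕ) :
    ∑ k ∈ range (2 * N), f k = ∑ m ∈ range N, (f (2 * m) + f (2 * m + 1)) := by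
  induction N with
  | zero => simp
  | succ n ih =>
      rw [Nat.mul_succ, Finset.sum_range_succ, Finset.sum_range_succ,
        Finset.sum_range_succ, ih]
      ring

/-- An even polynomial of natDegree < 2N is determined by its even coefficients. -/
lemma even_eval (p : Polynomial ℂ) (hp : ∀ x : ℂ, p.eval (-x) = p.eval x)
    (N : ℕ) (hd : p.natDegree < 2 * N) (x : ℂ) :
    p.eval x = ∑ m ∈ range N, p.coeff (2 * m) * x ^ (2 * m) := by
  rw [Polynomial.eval_eq_sum_range' hd, sum_range_two_mul']
  refine Finset.sum_congr rfl fun m _ => ?_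
  rw [odd_coeff_zero p hp m]
  ring

lemma key_det (N : ℕ) (hN : 1 ≤ N) (a b : Fin N → ℂ) (c : Fin N → ℂ) :
    Matrix.det (Matrix.of fun i j : Fin N =>
        (∑ m, c m * (a i) ^ (2 * (m : ℕ))) * (b i) ^ (2 * (j : ℕ))
          - (∑ m, c m * (b i) ^ (2 * (m : ℕ))) * (a i) ^ (2 * (j : ℕ))) = 0 := by
  haveI : Nonempty (Fin N) := ⟨⟨0, hN⟩⟩
  by_cases hc : c = 0
  · subst hc
    simp [Matrix.det_eq_zero_of_row_eq_zero (i := (⟨0, hN⟩ : Fin N))]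
    exact Matrix.det_eq_zero_of_row_eq_zero (⟨0, hN⟩ : Fin N) fun j => rfl
  · by_contra hdet
    apply hc
    apply Matrix.eq_zero_of_mulVec_eq_zero hdet
    funext i
    simp only [Matrix.mulVec, Matrix.of_apply, Pi.zero_apply, dotProduct]
    have : ∀ j : Fin N,
        ((∑ m, c m * a i ^ (2 * (m : ℕ))) * b i ^ (2 * (j : ℕ))
          - (∑ m, c m * b i ^ (2 * (m : ℕ))) * a i ^ (2 * (j : ℕ))) * c j
        = (∑ m, c m * a i ^ (2 * (m : ℕ))) * (c j * b i ^ (2 * (j : ℕ)))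
          - (∑ m, c m * b i ^ (2 * (m : ℕ))) * (c j * a i ^ (2 * (j : ℕ))) := by
      intro j; ring
    rw [Finset.sum_congr rfl fun j _ => this j, Finset.sum_sub_distrib,
      ← Finset.mul_sum, ← Finset.mul_sum]
    ring

theorem stmt6 (N : ℕ) (hN : 1 ≤ N) (η : ℂ) (hη : η ≠ 0)
    (ξ : Fin N → ℂ) (hG : GenG N η ξ) :
    (∀ c : Fin N → ℂ,
      Matrix.det (Matrix.of fun i j : Fin N =>
          (∑ m, c m * (ξ i + η / 2) ^ (2 * (m : ℕ))) * (ξ i - η / 2) ^ (2 * (j : ℕ))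
            - (∑ m, c m * (ξ i - η / 2) ^ (2 * (m : ℕ))) * (ξ i + η / 2) ^ (2 * (j : ℕ)))
        = 0) ∧
    (∀ α β : Polynomial ℂ,
      (∀ x : ℂ, α.eval (-x) = α.eval x) →
      (∀ x : ℂ, β.eval (-x) = β.eval x) →
      α.natDegree + β.natDegree < 2 * N →
      Matrix.det (Matrix.of fun i j : Fin N =>
          α.eval (ξ i + η / 2) * β.eval (ξ i + η / 2) * (ξ i - η / 2) ^ (2 * (j : ℕ))
            - α.eval (ξ i - η / 2) * β.eval (ξ i - η / 2) * (ξ i + η / 2) ^ (2 * (j : ℕ)))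
        = 0) := by
  constructor
  · intro c
    exact key_det N hN (fun i => ξ i + η / 2) (fun i => ξ i - η / 2) c
  · intro α β hα hβ hdeg
    set γ := α * β with hγ
    have hγeven : ∀ x : ℂ, γ.eval (-x) = γ.eval x := fun x => by
      simp [hγ, hα x, hβ x]
    have hγdeg : γ.natDegree < 2 * N := by
      calc γ.natDegree ≤ α.natDegree + β.natDegree := Polynomial.natDegree_mul_le
        _ < 2 * N := hdeg
    have heval : ∀ x : ℂ, α.eval x * β.eval x
        = ∑ m : Fin N, γ.coeff (2 * (m : ℕ)) * x ^ (2 * (m : ℕ)) := by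
      intro x
      rw [show α.eval x * β.eval x = γ.eval x by simp [hγ],
        even_eval γ hγeven N hγdeg x, Finset.sum_range fun m => γ.coeff (2 * m) * x ^ (2 * m)]
    have := key_det N hN (fun i => ξ i + η / 2) (fun i => ξ i - η / 2)
      (fun m => γ.coeff (2 * (m : ℕ)))
    have hM : (Matrix.of fun i j : Fin N =>
        Polynomial.eval (ξ i + η / 2) α * Polynomial.eval (ξ i + η / 2) β * (ξ i - η / 2) ^ (2 * (j : ℕ)) -
          Polynomial.eval (ξ i - η / 2) α * Polynomial.eval (ξ i - η / 2) β * (ξ i + η / 2) ^ (2 * (j : ℕ)))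
        = Matrix.of fun i j : Fin N =>
        (∑ m : Fin N, γ.coeff (2 * (m : ℕ)) * (ξ i + η / 2) ^ (2 * (m : ℕ))) * (ξ i - η / 2) ^ (2 * (j : ℕ)) -
          (∑ m : Fin N, γ.coeff (2 * (m : ℕ)) * (ξ i - η / 2) ^ (2 * (m : ℕ))) * (ξ i + η / 2) ^ (2 * (j : ℕ)) := by
      ext i j
      simp only [Matrix.of_apply]
      rw [heval, heval]
    rw [hM]
    exact this
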